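/- arXiv:1004.0751 — 2 statements merged into one kernel-verified Lean document; each statement's English description precedes it below -/
import Mathlib

section
/- The first negative isospectral Ablowitz–Ladik flow and the zeroth non-isospectral flow satisfy ⟦K⁻¹, σ⁰⟧(u)(n) = −K⁻¹(u)(n) for every u and every n ∈ ℤ; that is, (K⁻¹)′(u)[σ⁰(u)](n) − (σ⁰)′(u)[K⁻¹(u)](n) = −K⁻¹(u)(n), where both Gateaux derivatives exist. -/
/-- A quadruple of real sequences `u = (Q, R, S, T)`. -/
abbrev ALQuad : Type := (ℤ → ℝ) × (ℤ → ℝ) × (ℤ → ℝ) × (ℤ → ℝ)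

/-- Evaluation of a quadruple of sequences at `n`, as a vector in `ℝ⁴`. -/
def evalQ (u : ALQuad) (n : ℤ) : ℝ × ℝ × ℝ × ℝ :=
  (u.1 n, u.2.1 n, u.2.2.1 n, u.2.2.2 n)

/-- The zeroth isospectral four-potential Ablowitz–Ladik flow `K⁰`. -/
def K0 (u : ALQuad) : ALQuad :=
  (fun n => u.1 n, fun n => -u.2.1 n, fun n => u.2.2.1 n, fun n => -u.2.2.2 n)

/-- The first positive isospectral four-potential Ablowitz–Ladik flow `K¹`. -/
def K1 (u : ALQuad) : ALQuad :=
  (fun n => (1 - u.1 n * u.2.1 n) * u.2.2.1 n,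
   fun n => -((1 - u.1 n * u.2.1 n) * u.2.2.2 (n - 1)),
   fun n => (1 - u.2.2.1 n * u.2.2.2 n) * u.1 (n + 1),
   fun n => -((1 - u.2.2.1 n * u.2.2.2 n) * u.2.1 n))

/-- The first negative isospectral four-potential Ablowitz–Ladik flow `K⁻¹`. -/
def Kneg1 (u : ALQuad) : ALQuad :=
  (fun n => (1 - u.1 n * u.2.1 n) * u.2.2.1 (n - 1),
   fun n => -((1 - u.1 n * u.2.1 n) * u.2.2.2 n),
   fun n => (1 - u.2.2.1 n * u.2.2.2 n) * u.1 n,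
   fun n => -((1 - u.2.2.1 n * u.2.2.2 n) * u.2.1 (n + 1)))

/-- The zeroth non-isospectral four-potential Ablowitz–Ladik flow `σ⁰`. -/
noncomputable def sigma0 (u : ALQuad) : ALQuad :=
  (fun n => (2 * (n : ℝ) + 1 / 2) * u.1 n,
   fun n => -((2 * (n : ℝ) + 1 / 2) * u.2.1 n),
   fun n => (2 * (n : ℝ) + 3 / 2) * u.2.2.1 n,
   fun n => -((2 * (n : ℝ) + 3 / 2) * u.2.2.2 n))

private lemma hlin (x c : ℝ) : HasDerivAt (fun ε : ℝ => x + ε * c) c 0 := by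
  simpa using ((hasDerivAt_id (0:ℝ)).mul_const c).const_add x

private lemma htriple (x1 c1 x2 c2 x3 c3 : ℝ) :
    HasDerivAt (fun ε : ℝ => (1 - (x1 + ε*c1)*(x2+ε*c2))*(x3+ε*c3))
      (-(c1*x2+x1*c2)*x3 + (1 - x1*x2)*c3) 0 := by
  have := (((hasDerivAt_const (0:ℝ) (1:ℝ)).sub ((hlin x1 c1).mul (hlin x2 c2))).mul (hlin x3 c3))
  exact this.congr_deriv (by simp only [Pi.sub_apply, Pi.mul_apply]; ring)

private lemma hlc (c x d : ℝ) : HasDerivAt (fun ε : ℝ => c * (x + ε * d)) (c * d) 0 :=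
  (hlin x d).const_mul c

/-- `⟦K⁻¹, σ⁰⟧(u)(n) = −K⁻¹(u)(n)`: both Gateaux derivatives `(K⁻¹)′(u)[σ⁰(u)](n)` and
`(σ⁰)′(u)[K⁻¹(u)](n)` exist, and their difference equals `−K⁻¹(u)(n)`. -/
theorem AL_bracket_Kneg1_sigma0 (u : ALQuad) (n : ℤ) :
    ∃ d₁ d₂ : ℝ × ℝ × ℝ × ℝ,
      HasDerivAt (fun ε : ℝ => evalQ (Kneg1 (u + ε • sigma0 u)) n) d₁ 0 ∧
      HasDerivAt (fun ε : ℝ => evalQ (sigma0 (u + ε • Kneg1 u)) n) d₂ 0 ∧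
      d₁ - d₂ = -evalQ (Kneg1 u) n := by
  set Q := u.1; set R := u.2.1; set S := u.2.2.1; set T := u.2.2.2
  have e1 : (fun ε : ℝ => evalQ (Kneg1 (u + ε • sigma0 u)) n) =
      (fun ε : ℝ =>
       ((1 - (Q n + ε*((2*(n:ℝ)+1/2)*Q n))*(R n + ε*(-((2*(n:ℝ)+1/2)*R n)))) *
          (S (n-1) + ε*((2*((n:ℝ)-1)+3/2)*S (n-1))),
        -((1 - (Q n + ε*((2*(n:ℝ)+1/2)*Q n))*(R n + ε*(-((2*(n:ℝ)+1/2)*R n)))) *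
          (T n + ε*(-((2*(n:ℝ)+3/2)*T n)))),
        (1 - (S n + ε*((2*(n:ℝ)+3/2)*S n))*(T n + ε*(-((2*(n:ℝ)+3/2)*T n)))) *
          (Q n + ε*((2*(n:ℝ)+1/2)*Q n)),
        -((1 - (S n + ε*((2*(n:ℝ)+3/2)*S n))*(T n + ε*(-((2*(n:ℝ)+3/2)*T n)))) *
          (R (n+1) + ε*(-((2*((n:ℝ)+1)+1/2)*R (n+1))))))) := by
    funext ε
    simp only [evalQ, Kneg1, sigma0, Prod.fst_add, Prod.snd_add, Prod.smul_fst, Prod.smul_snd,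
      Pi.add_apply, Pi.smul_apply, smul_eq_mul, Prod.mk.injEq]
    push_cast
    exact ⟨by ring, by ring, by ring, by ring⟩
  have e2 : (fun ε : ℝ => evalQ (sigma0 (u + ε • Kneg1 u)) n) =
      (fun ε : ℝ =>
       ((2*(n:ℝ)+1/2) * (Q n + ε * ((1 - Q n * R n) * S (n-1))),
        -((2*(n:ℝ)+1/2) * (R n + ε * (-((1 - Q n * R n) * T n)))),
        (2*(n:ℝ)+3/2) * (S n + ε * ((1 - S n * T n) * Q n)),
        -((2*(n:ℝ)+3/2) * (T n + ε * (-((1 - S n * T n) * R (n+1))))))) := by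
    funext ε
    simp only [evalQ, Kneg1, sigma0, Prod.fst_add, Prod.snd_add, Prod.smul_fst, Prod.smul_snd,
      Pi.add_apply, Pi.smul_apply, smul_eq_mul, Prod.mk.injEq]
    exact ⟨rfl, rfl, rfl, rfl⟩
  have h1 := (htriple (Q n) ((2*(n:ℝ)+1/2)*Q n) (R n) (-((2*(n:ℝ)+1/2)*R n))
      (S (n-1)) ((2*((n:ℝ)-1)+3/2)*S (n-1))).prodMk
    (((htriple (Q n) ((2*(n:ℝ)+1/2)*Q n) (R n) (-((2*(n:ℝ)+1/2)*R n))
      (T n) (-((2*(n:ℝ)+3/2)*T n))).neg).prodMk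
    ((htriple (S n) ((2*(n:ℝ)+3/2)*S n) (T n) (-((2*(n:ℝ)+3/2)*T n))
      (Q n) ((2*(n:ℝ)+1/2)*Q n)).prodMk
    ((htriple (S n) ((2*(n:ℝ)+3/2)*S n) (T n) (-((2*(n:ℝ)+3/2)*T n))
      (R (n+1)) (-((2*((n:ℝ)+1)+1/2)*R (n+1)))).neg)))
  simp only [Pi.neg_apply] at h1
  rw [← e1] at h1
  have h2 := (hlc (2*(n:ℝ)+1/2) (Q n) ((1 - Q n * R n) * S (n-1))).prodMk
    (((hlc (2*(n:ℝ)+1/2) (R n) (-((1 - Q n * R n) * T n))).neg).prodMk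
    ((hlc (2*(n:ℝ)+3/2) (S n) ((1 - S n * T n) * Q n)).prodMk
    ((hlc (2*(n:ℝ)+3/2) (T n) (-((1 - S n * T n) * R (n+1)))).neg)))
  simp only [Pi.neg_apply] at h2
  rw [← e2] at h2
  refine ⟨_, _, h1, h2, ?_⟩
  simp only [evalQ, Kneg1, Prod.mk_sub_mk, Prod.neg_mk, Prod.mk.injEq]
  exact ⟨by ring, by ring, by ring, by ring⟩
end

section
/- Centerless Kac–Moody–Virasoro algebra of symmetries of the non-isospectral Ablowitz–Ladik hierarchy (Theorem 4.2): fix m ∈ ℤ and t ∈ ℝ, and for s ∈ ℕ set η(s) := Σ_{j=0}^{s} C(s,j)·(m·t)^{s−j} • σ(m − j·m) and γ(s) := Σ_{j=0}^{s} C(s,j)·(m·t)^{s−j} • K(−j·m), where C(s,j) is the binomial coefficient. Then for all s, l ∈ ℕ: ⁅η(s), η(l)⁆ = (l − s)·m • η(s + l − 1) whenever s + l ≥ 1; ⁅γ(s), γ(l)⁆ = 0; ⁅η(s), γ(l)⁆ = l·m • γ(s + l − 1) whenever l ≥ 1; and ⁅η(s), γ(0)⁆ = 0. -/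
open Finset

private lemma choose_succ_mul' (s k : ℕ) :
    (k + 1) * s.choose (k + 1) = s * (s - 1).choose k := by
  cases s with
  | zero => simp [Nat.choose_eq_zero_of_lt (Nat.succ_pos k)]
  | succ s =>
    simpa [Nat.succ_sub_one, mul_comm] using (Nat.add_one_mul_choose_eq s k).symm

private lemma vandermonde_range (a b n : ℕ) :
    ∑ j ∈ range (n + 1), a.choose j * b.choose (n - j) = (a + b).choose n := by
  rw [Nat.add_choose_eq, Finset.Nat.sum_antidiagonal_eq_sum_range_succ_mk]

private lemma idOne (s l n : ℕ) :
    ∑ j ∈ range (n + 1 + 1), j * s.choose j * l.choose (n + 1 - j)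
      = s * (s + l - 1).choose n := by
  rw [Finset.sum_range_succ']
  simp only [Nat.zero_eq, Nat.choose_zero_right, zero_mul]
  have : ∀ i ∈ range (n + 1),
      (i + 1) * s.choose (i + 1) * l.choose (n + 1 - (i + 1))
        = s * ((s - 1).choose i * l.choose (n - i)) := by
    intro i hi
    rw [choose_succ_mul']
    have : n + 1 - (i + 1) = n - i := by omega
    rw [this, mul_assoc]
  rw [Finset.sum_congr rfl this, ← Finset.mul_sum, vandermonde_range, add_zero]
  cases s with
  | zero => simp
  | succ s =>
    congr 2
    omega

private lemma idTwo (s l n : ℕ) :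
    ∑ j ∈ range (n + 1 + 1), (n + 1 - j) * s.choose j * l.choose (n + 1 - j)
      = l * (s + l - 1).choose n := by
  rw [← Finset.sum_range_reflect]
  have : ∀ j ∈ range (n + 1 + 1),
      (n + 1 - (n + 1 + 1 - 1 - j)) * s.choose (n + 1 + 1 - 1 - j)
          * l.choose (n + 1 - (n + 1 + 1 - 1 - j))
        = j * l.choose j * s.choose (n + 1 - j) := by
    intro j hj
    rw [Finset.mem_range] at hj
    have h1 : n + 1 + 1 - 1 - j = n + 1 - j := by omega
    have h2 : n + 1 - (n + 1 - j) = j := by omega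
    rw [h1, h2]
    ring
  rw [Finset.sum_congr rfl this, idOne l s n]
  congr 2
  omega

private lemma idComb (s l n : ℕ) :
    ∑ j ∈ range (n + 1 + 1),
        (((n + 1 - j : ℕ) : ℤ) - (j : ℤ)) * s.choose j * l.choose (n + 1 - j)
      = ((l : ℤ) - (s : ℤ)) * (s + l - 1).choose n := by
  have h1 := idOne s l n
  have h2 := idTwo s l n
  have e : ∀ j ∈ range (n + 1 + 1),
      (((n + 1 - j : ℕ) : ℤ) - (j : ℤ)) * s.choose j * l.choose (n + 1 - j)
        = (((n + 1 - j) * s.choose j * l.choose (n + 1 - j) : ℕ) : ℤ)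
          - ((j * s.choose j * l.choose (n + 1 - j) : ℕ) : ℤ) := by
    intro j hj
    push_cast
    ring
  rw [Finset.sum_congr rfl e, Finset.sum_sub_distrib, ← Nat.cast_sum, ← Nat.cast_sum,
    h1, h2]
  push_cast
  ring

private lemma sq_diag {M : Type*} [AddCommMonoid M] (N : ℕ) (v : ℕ → ℕ → M)
    (h1 : ∀ j k, N ≤ j → v j k = 0) (h2 : ∀ j k, N ≤ k → v j k = 0) :
    ∑ j ∈ range N, ∑ k ∈ range N, v j k
      = ∑ n ∈ range (2 * N), ∑ j ∈ range (n + 1), v j (n - j) := by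
  rw [Finset.sum_range_diag_flip]
  have step1 : ∑ i ∈ range (2 * N), ∑ k ∈ range (2 * N - i), v i k
      = ∑ i ∈ range N, ∑ k ∈ range (2 * N - i), v i k := by
    refine (Finset.sum_subset (Finset.range_subset_range.2 (by omega : N ≤ 2 * N))
      fun i _ hi => ?_).symm
    rw [Finset.mem_range] at hi
    push_neg at hi
    exact Finset.sum_eq_zero fun k _ => h1 i k hi
  rw [step1]
  refine Finset.sum_congr rfl fun i hi => ?_
  rw [Finset.mem_range] at hi
  refine (Finset.sum_subset (Finset.range_subset_range.2 (by omega : N ≤ 2 * N - i))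
    fun k hk hk2 => ?_)
  rw [Finset.mem_range] at hk2
  exact h2 i k (by omega)

private lemma sum_coef (s l n : ℕ) (x : ℝ) (c : ℕ → ℤ) :
    ∑ j ∈ range (n + 1 + 1),
        ((s.choose j : ℝ) * x ^ (s - j)) * ((l.choose (n + 1 - j) : ℝ)
          * x ^ (l - (n + 1 - j))) * (c j : ℝ)
      = ((∑ j ∈ range (n + 1 + 1),
            c j * s.choose j * l.choose (n + 1 - j) : ℤ) : ℝ)
          * x ^ (s + l - (n + 1)) := by
  push_cast
  rw [Finset.sum_mul]
  refine Finset.sum_congr rfl fun j hj => ?_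
  rw [Finset.mem_range] at hj
  by_cases hjs : j ≤ s ∧ n + 1 - j ≤ l
  · have he : (s - j) + (l - (n + 1 - j)) = s + l - (n + 1) := by omega
    rw [← he, pow_add]
    ring
  · rcases Nat.lt_or_ge s j with h | h
    · rw [Nat.choose_eq_zero_of_lt h]
      push_cast
      ring
    · have h2 : l < n + 1 - j := by omega
      rw [Nat.choose_eq_zero_of_lt h2]
      push_cast
      ring

private lemma master {G : Type*} [LieRing G] [LieAlgebra ℝ G]
    (f : ℕ → G) (s l : ℕ) (x : ℝ) (c : ℕ → ℕ → ℤ) (w : ℤ)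
    (hc0 : c 0 0 = 0)
    (hid : ∀ n : ℕ, ∑ j ∈ range (n + 1 + 1),
        c j (n + 1 - j) * s.choose j * l.choose (n + 1 - j)
          = w * (s + l - 1).choose n)
    (hsl : 1 ≤ s + l) :
    ∑ j ∈ range (s + 1), ∑ k ∈ range (l + 1),
        (((s.choose j : ℝ) * x ^ (s - j)) * ((l.choose k : ℝ) * x ^ (l - k))
          * (c j k : ℝ)) • f (j + k)
      = w • ∑ r ∈ range (s + l),
          (((s + l - 1).choose r : ℝ) * x ^ (s + l - 1 - r)) • f (r + 1) := by
  set N := s + l + 1 with hN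
  set v : ℕ → ℕ → G := fun j k =>
    (((s.choose j : ℝ) * x ^ (s - j)) * ((l.choose k : ℝ) * x ^ (l - k))
      * (c j k : ℝ)) • f (j + k) with hv
  have hv1 : ∀ j k, N ≤ j → v j k = 0 := by
    intro j k hj
    have : s.choose j = 0 := Nat.choose_eq_zero_of_lt (by omega)
    simp [hv, this]
  have hv2 : ∀ j k, N ≤ k → v j k = 0 := by
    intro j k hk
    have : l.choose k = 0 := Nat.choose_eq_zero_of_lt (by omega)
    simp [hv, this]
  have ext1 : ∑ j ∈ range (s + 1), ∑ k ∈ range (l + 1), v j k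
      = ∑ j ∈ range N, ∑ k ∈ range N, v j k := by
    rw [Finset.sum_subset (Finset.range_subset_range.2 (by omega : s + 1 ≤ N))
      (fun j _ hj => Finset.sum_eq_zero fun k _ => by
        rw [Finset.mem_range] at hj
        have : s.choose j = 0 := Nat.choose_eq_zero_of_lt (by omega)
        simp [hv, this])]
    refine Finset.sum_congr rfl fun j _ => ?_
    exact Finset.sum_subset (Finset.range_subset_range.2 (by omega : l + 1 ≤ N))
      fun k _ hk => by
        rw [Finset.mem_range] at hk
        have : l.choose k = 0 := Nat.choose_eq_zero_of_lt (by omega)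
        simp [hv, this]
  calc ∑ j ∈ range (s + 1), ∑ k ∈ range (l + 1), v j k
      = ∑ n ∈ range (2 * N), ∑ j ∈ range (n + 1), v j (n - j) := by
        rw [ext1]; exact sq_diag N v hv1 hv2
    _ = ∑ n ∈ range (2 * N),
          (∑ j ∈ range (n + 1),
            ((s.choose j : ℝ) * x ^ (s - j)) * ((l.choose (n - j) : ℝ)
              * x ^ (l - (n - j))) * (c j (n - j) : ℝ)) • f n := by
        refine Finset.sum_congr rfl fun n _ => ?_
        rw [Finset.sum_smul]
        refine Finset.sum_congr rfl fun j hj => ?_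
        rw [Finset.mem_range] at hj
        have : j + (n - j) = n := by omega
        simp only [hv]
        rw [this]
    _ = w • ∑ r ∈ range (s + l),
          (((s + l - 1).choose r : ℝ) * x ^ (s + l - 1 - r)) • f (r + 1) := by
        have h2N : 2 * N = (2 * (s + l) + 1) + 1 := by omega
        rw [h2N, Finset.sum_range_succ']
        have hz : (∑ j ∈ range (0 + 1),
            ((s.choose j : ℝ) * x ^ (s - j)) * ((l.choose (0 - j) : ℝ)
              * x ^ (l - (0 - j))) * (c j (0 - j) : ℝ)) • f 0 = 0 := by
          simp [hc0]
        rw [hz, add_zero]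
        have key : ∀ i : ℕ,
            (∑ j ∈ range (i + 1 + 1),
              ((s.choose j : ℝ) * x ^ (s - j)) * ((l.choose (i + 1 - j) : ℝ)
                * x ^ (l - (i + 1 - j))) * (c j (i + 1 - j) : ℝ))
              = ((w : ℝ) * ((s + l - 1).choose i : ℝ)) * x ^ (s + l - 1 - i) := by
          intro i
          rw [sum_coef s l i x (fun j => c j (i + 1 - j)), hid i]
          have : s + l - (i + 1) = s + l - 1 - i := by omega
          rw [this]
          push_cast
          ring
        rw [Finset.smul_sum]
        have shrink : ∑ i ∈ range (2 * (s + l) + 1),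
            (∑ j ∈ range (i + 1 + 1),
              ((s.choose j : ℝ) * x ^ (s - j)) * ((l.choose (i + 1 - j) : ℝ)
                * x ^ (l - (i + 1 - j))) * (c j (i + 1 - j) : ℝ)) • f (i + 1)
            = ∑ i ∈ range (s + l),
              (∑ j ∈ range (i + 1 + 1),
                ((s.choose j : ℝ) * x ^ (s - j)) * ((l.choose (i + 1 - j) : ℝ)
                  * x ^ (l - (i + 1 - j))) * (c j (i + 1 - j) : ℝ)) • f (i + 1) := by
          refine (Finset.sum_subset (Finset.range_subset_range.2 (by omega : s + l ≤ 2 * (s + l) + 1))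
            fun i _ hi => ?_).symm
          rw [Finset.mem_range] at hi
          rw [key i]
          have : (s + l - 1).choose i = 0 := Nat.choose_eq_zero_of_lt (by omega)
          simp [this]
        rw [shrink]
        refine Finset.sum_congr rfl fun i _ => ?_
        rw [key i, ← Int.cast_smul_eq_zsmul ℝ w, smul_smul]
        congr 1
        ring

private lemma sum_lie' {G : Type*} [LieRing G] {α : Type*} (s : Finset α)
    (f : α → G) (y : G) : ⁅∑ i ∈ s, f i, y⁆ = ∑ i ∈ s, ⁅f i, y⁆ :=
  map_sum (AddMonoidHom.mk' (fun a => ⁅a, y⁆) (fun a b => add_lie a b y)) f s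

private lemma lie_sum' {G : Type*} [LieRing G] {α : Type*} (s : Finset α)
    (f : α → G) (y : G) : ⁅y, ∑ i ∈ s, f i⁆ = ∑ i ∈ s, ⁅y, f i⁆ :=
  map_sum (AddMonoidHom.mk' (fun a => ⁅y, a⁆) (fun a b => lie_add y a b)) f s

/-- Centerless Kac–Moody–Virasoro algebra of the η- and γ-symmetries of the
non-isospectral Ablowitz–Ladik hierarchy (Theorem 4.2). -/
theorem AL_nonisospectral_symmetry_algebra {g : Type*} [LieRing g] [LieAlgebra ℝ g]
    (K σ : ℤ → g)
    (hKK : ∀ m s : ℤ, ⁅K m, K s⁆ = 0)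
    (hKσ : ∀ m s : ℤ, ⁅K m, σ s⁆ = m • K (m + s))
    (hσσ : ∀ m s : ℤ, ⁅σ m, σ s⁆ = (m - s) • σ (m + s))
    (m : ℤ) (t : ℝ) (η γ : ℕ → g)
    (hη : ∀ s : ℕ, η s = ∑ j ∈ Finset.range (s + 1),
        ((s.choose j : ℝ) * ((m : ℝ) * t) ^ (s - j)) • σ (m - (j : ℤ) * m))
    (hγ : ∀ s : ℕ, γ s = ∑ j ∈ Finset.range (s + 1),
        ((s.choose j : ℝ) * ((m : ℝ) * t) ^ (s - j)) • K (-(j : ℤ) * m)) :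
    ∀ s l : ℕ,
      (1 ≤ s + l → ⁅η s, η l⁆ = (((l : ℤ) - (s : ℤ)) * m) • η (s + l - 1)) ∧
      ⁅γ s, γ l⁆ = 0 ∧
      (1 ≤ l → ⁅η s, γ l⁆ = ((l : ℤ) * m) • γ (s + l - 1)) ∧
      ⁅η s, γ 0⁆ = 0 := by
  have hσK : ∀ a b : ℤ, ⁅σ a, K b⁆ = (-b) • K (b + a) := by
    intro a b
    rw [← lie_skew, hKσ, ← neg_smul]
  set x : ℝ := (m : ℝ) * t with hx
  intro s l
  refine ⟨?_, ?_, ?_, ?_⟩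
  · -- η-η bracket
    intro hsl
    have expand : ⁅η s, η l⁆ = ∑ j ∈ range (s + 1), ∑ k ∈ range (l + 1),
        (((s.choose j : ℝ) * x ^ (s - j)) * ((l.choose k : ℝ) * x ^ (l - k))
          * ((((k : ℤ) - j) * m : ℤ) : ℝ)) • σ (2 * m - ((j + k : ℕ) : ℤ) * m) := by
      rw [hη s, hη l, sum_lie']
      refine Finset.sum_congr rfl fun j _ => ?_
      rw [lie_sum']
      refine Finset.sum_congr rfl fun k _ => ?_
      rw [smul_lie, lie_smul, hσσ]
      have harg : (m - (j : ℤ) * m) + (m - (k : ℤ) * m)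
          = 2 * m - ((j + k : ℕ) : ℤ) * m := by push_cast; ring
      have hco : (m - (j : ℤ) * m) - (m - (k : ℤ) * m) = ((k : ℤ) - j) * m := by ring
      rw [harg, hco, ← Int.cast_smul_eq_zsmul ℝ, smul_smul, smul_smul]
    rw [expand]
    have := master (G := g) (fun n => σ (2 * m - (n : ℤ) * m)) s l x
      (fun j k => ((k : ℤ) - j) * m) (((l : ℤ) - s) * m)
      (by simp)
      (by
        intro n
        have e : ∀ j ∈ range (n + 1 + 1),
            (((n + 1 - j : ℕ) : ℤ) - j) * m * s.choose j * l.choose (n + 1 - j)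
              = m * ((((n + 1 - j : ℕ) : ℤ) - j) * s.choose j * l.choose (n + 1 - j)) := by
          intro j _; ring
        rw [Finset.sum_congr rfl e, ← Finset.mul_sum, idComb]
        ring)
      hsl
    rw [this, hη (s + l - 1)]
    have hslr : s + l - 1 + 1 = s + l := by omega
    rw [hslr]
    refine congrArg _ (Finset.sum_congr rfl fun r _ => ?_)
    congr 2
    push_cast
    ring
  · -- γ-γ bracket
    rw [hγ s, hγ l]
    simp [sum_lie', lie_sum', lie_smul, smul_lie, hKK]
  · -- η-γ bracket
    intro hl
    have hsl : 1 ≤ s + l := by omega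
    have expand : ⁅η s, γ l⁆ = ∑ j ∈ range (s + 1), ∑ k ∈ range (l + 1),
        (((s.choose j : ℝ) * x ^ (s - j)) * ((l.choose k : ℝ) * x ^ (l - k))
          * (((k : ℤ) * m : ℤ) : ℝ)) • K (m - ((j + k : ℕ) : ℤ) * m) := by
      rw [hη s, hγ l, sum_lie']
      refine Finset.sum_congr rfl fun j _ => ?_
      rw [lie_sum']
      refine Finset.sum_congr rfl fun k _ => ?_
      rw [smul_lie, lie_smul, hσK]
      have harg : (-(k : ℤ) * m) + (m - (j : ℤ) * m)
          = m - ((j + k : ℕ) : ℤ) * m := by push_cast; ring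
      have hco : -(-(k : ℤ) * m) = (k : ℤ) * m := by ring
      rw [harg, hco, ← Int.cast_smul_eq_zsmul ℝ, smul_smul, smul_smul]
    rw [expand]
    have := master (G := g) (fun n => K (m - (n : ℤ) * m)) s l x
      (fun j k => (k : ℤ) * m) ((l : ℤ) * m)
      (by simp)
      (by
        intro n
        have e : ∀ j ∈ range (n + 1 + 1),
            ((n + 1 - j : ℕ) : ℤ) * m * s.choose j * l.choose (n + 1 - j)
              = m * ((((n + 1 - j) * s.choose j * l.choose (n + 1 - j) : ℕ) : ℤ)) := by
          intro j _; push_cast; ring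
        rw [Finset.sum_congr rfl e, ← Finset.mul_sum, ← Nat.cast_sum, idTwo]
        push_cast
        ring)
      hsl
    rw [this, hγ (s + l - 1)]
    have hslr : s + l - 1 + 1 = s + l := by omega
    rw [hslr]
    refine congrArg _ (Finset.sum_congr rfl fun r _ => ?_)
    congr 2
    push_cast
    ring
  · -- η with γ 0
    rw [hη s, hγ 0]
    simp [sum_lie', lie_sum', lie_smul, smul_lie, hσK]
end
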